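/- For real x with x > 2 and real y ∈ [−2, 2], log|x − y| = log((x + √(x² − 4))/2) − ∑_{n≥1} (2/n)·((x − √(x² − 4))/2)ⁿ·T_n(y/2), and the series converges absolutely. -/

import Mathlib

open Polynomial Polynomial.Chebyshev

/-- For `x > 2` and `y ∈ [-2,2]`,
`log |x - y| = log((x + √(x²-4))/2) - ∑_{n ≥ 1} (2/n) ((x - √(x²-4))/2)ⁿ T_n(y/2)`,
and the series converges absolutely. -/
theorem haagerup_log_expansion_outside (x y : ℝ) (hx : 2 < x)
    (hy : y ∈ Set.Icc (-2 : ℝ) 2) :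
    Summable
      (fun n : ℕ =>
        |(2 / ((n : ℝ) + 1)) * ((x - Real.sqrt (x ^ 2 - 4)) / 2) ^ (n + 1) *
          (T ℝ ((n : ℤ) + 1)).eval (y / 2)|) ∧
    HasSum
      (fun n : ℕ =>
        (2 / ((n : ℝ) + 1)) * ((x - Real.sqrt (x ^ 2 - 4)) / 2) ^ (n + 1) *
          (T ℝ ((n : ℤ) + 1)).eval (y / 2))
      (Real.log ((x + Real.sqrt (x ^ 2 - 4)) / 2) - Real.log |x - y|) := by
  obtain ⟨hy1, hy2⟩ := hy
  set s := Real.sqrt (x ^ 2 - 4) with hs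
  have hx2 : (0:ℝ) < x ^ 2 - 4 := by nlinarith
  have hs0 : 0 < s := Real.sqrt_pos.mpr hx2
  have hssq : s ^ 2 = x ^ 2 - 4 := Real.sq_sqrt hx2.le
  have hsx : s < x := by
    nlinarith [Real.sq_sqrt hx2.le, Real.sqrt_nonneg (x ^ 2 - 4)]
  clear_value s
  set q := (x - s) / 2 with hqdef
  have hq0 : 0 < q := by rw [hqdef]; linarith
  have hq1 : q < 1 := by rw [hqdef]; nlinarith
  have hrq : (x + s) / 2 * q = 1 := by rw [hqdef]; nlinarith
  clear_value q
  set θ := Real.arccos (y / 2) with hθ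
  have hycos : Real.cos θ = y / 2 := Real.cos_arccos (by linarith) (by linarith)
  clear_value θ
  set z : ℂ := (q : ℂ) * Complex.exp (θ * Complex.I) with hz
  have hznorm : ‖z‖ < 1 := by
    rw [hz, norm_mul, Complex.norm_exp_ofReal_mul_I, mul_one, Complex.norm_real,
      Real.norm_of_nonneg hq0.le]
    exact hq1
  have hpow : ∀ n : ℕ, (2 : ℂ) * (z ^ n / n) =
      ((2 / (n:ℝ) * q ^ n : ℝ) : ℂ) * Complex.exp ((n * θ : ℝ) * Complex.I) := by
    intro n
    rw [hz, mul_pow, ← Complex.exp_nat_mul]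
    push_cast
    ring_nf
  have hre : ∀ n : ℕ, ((2 : ℂ) * (z ^ n / n)).re = 2 / (n:ℝ) * q ^ n * Real.cos (n * θ) := by
    intro n
    rw [hpow n, Complex.re_ofReal_mul, Complex.exp_ofReal_mul_I_re]
  have hmain := RCLike.hasSum_re ℂ ((Complex.hasSum_taylorSeries_neg_log hznorm).mul_left 2)
  rw [show (fun n : ℕ => RCLike.re ((2 : ℂ) * (z ^ n / n))) =
      fun n : ℕ => 2 / (n:ℝ) * q ^ n * Real.cos (n * θ) from funext hre] at hmain
  -- |1 - z|²
  have habs : ‖1 - z‖ ^ 2 = 1 - 2 * q * Real.cos θ + q ^ 2 := by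
    rw [← Complex.normSq_eq_norm_sq, Complex.normSq_apply, hz]
    simp only [Complex.sub_re, Complex.sub_im, Complex.one_re, Complex.one_im,
      Complex.mul_re, Complex.mul_im, Complex.ofReal_re, Complex.ofReal_im,
      Complex.exp_ofReal_mul_I_re, Complex.exp_ofReal_mul_I_im]
    nlinarith [Real.sin_sq_add_cos_sq θ]
  have hzne : (0:ℝ) < ‖1 - z‖ := by
    rw [norm_pos_iff]
    intro h
    rw [sub_eq_zero] at h
    rw [← h] at hznorm
    simp at hznorm
  have hpos : (0:ℝ) < 1 - 2 * q * Real.cos θ + q ^ 2 := habs ▸ (by positivity)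
  have hxy : x - y = (x + s) / 2 * (1 - 2 * q * Real.cos θ + q ^ 2) := by
    have h := hycos
    nlinarith
  have hval : RCLike.re ((2:ℂ) * -Complex.log (1 - z)) =
      Real.log ((x + s) / 2) - Real.log |x - y| := by
    have h2 : RCLike.re ((2:ℂ) * -Complex.log (1 - z)) =
        -2 * Real.log ‖1 - z‖ := by
      simp [Complex.log_re]
    rw [h2]
    have hxy0 : (0:ℝ) < x - y := by linarith
    rw [abs_of_pos hxy0, hxy, Real.log_mul (by positivity) hpos.ne', ← habs, Real.log_pow]
    push_cast
    ring
  rw [hval] at hmain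
  -- shift index by one
  have hshift : HasSum (fun n : ℕ => 2 / ((n:ℝ) + 1) * q ^ (n + 1) * Real.cos (((n:ℝ) + 1) * θ))
      (Real.log ((x + s) / 2) - Real.log |x - y|) := by
    have := (hasSum_nat_add_iff (f := fun n : ℕ => 2 / (n:ℝ) * q ^ n * Real.cos (n * θ)) 1).mpr
      (by simpa only [Nat.cast_zero, div_zero, zero_mul, pow_zero, mul_one, Finset.range_one,
        Finset.sum_singleton, add_zero] using hmain)
    convert this using 2 with n
    · rfl
    push_cast
    ring_nf
  have hterm : ∀ n : ℕ, 2 / ((n:ℝ) + 1) * q ^ (n + 1) * eval (y / 2) (T ℝ ((n:ℤ) + 1)) =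
      2 / ((n:ℝ) + 1) * q ^ (n + 1) * Real.cos (((n:ℝ) + 1) * θ) := by
    intro n
    rw [← hycos, Polynomial.Chebyshev.T_real_cos]
    push_cast
    ring_nf
  constructor
  · have hgs : Summable (fun n : ℕ => 2 * q ^ (n + 1)) :=
      ((summable_geometric_of_lt_one hq0.le hq1).mul_left (2 * q)).congr
        (fun n => by rw [pow_succ]; ring)
    refine Summable.of_nonneg_of_le (fun n => abs_nonneg _) (fun n => ?_) hgs
    rw [hterm n, abs_mul, abs_mul, abs_of_pos (show (0:ℝ) < 2 / ((n:ℝ)+1) by positivity),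
      abs_of_pos (pow_pos hq0 _)]
    have h1 : 2 / ((n:ℝ)+1) ≤ 2 := by
      rw [div_le_iff₀ (by positivity)]
      nlinarith [Nat.cast_nonneg (α := ℝ) n]
    have h3 : |Real.cos (((n:ℝ)+1) * θ)| ≤ 1 := Real.abs_cos_le_one _
    calc 2 / ((n:ℝ)+1) * q ^ (n+1) * |Real.cos (((n:ℝ)+1)*θ)|
        ≤ 2 * q ^ (n+1) * 1 := by
          gcongr
      _ = 2 * q ^ (n+1) := by ring
  · rw [show (fun n : ℕ => 2 / ((n:ℝ) + 1) * q ^ (n + 1) * eval (y / 2) (T ℝ ((n:ℤ) + 1))) =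
        fun n : ℕ => 2 / ((n:ℝ) + 1) * q ^ (n + 1) * Real.cos (((n:ℝ) + 1) * θ) from
        funext hterm]
    exact hshift
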